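/- Let X be a topological space, let m : X × X → X be continuous and let e : X be such that m (e, x) = x, m (x, e) = x and m (x, x) = x for all x (a topological idempotent unital magma). Then the fundamental group of X at e is trivial (FundamentalGroup X e is a subsingleton). -/

import Mathlib

open CategoryTheory

/-- the fundamental group of a topological idempotent unitary magma
at its unit is trivial. -/
theorem fundamentalGroup_of_topological_idem_magma_trivial
    {X : Type*} [TopologicalSpace X] (m : X × X → X) (e : X)
    (hc : Continuous m)
    (h1 : ∀ x, m (e, x) = x) (h2 : ∀ x, m (x, e) = x) (h3 : ∀ x, m (x, x) = x) :
    Subsingleton (FundamentalGroup X e) := by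
  -- pointwise multiplication of loops at `e`
  let mul : Path e e → Path e e → Path e e := fun p q =>
    { toFun := fun t => m (p t, q t)
      continuous_toFun := hc.comp (p.continuous.prodMk q.continuous)
      source' := by simp [h3]
      target' := by simp [h3] }
  have mul_apply : ∀ p q t, mul p q t = m (p t, q t) := fun _ _ _ => rfl
  have hmul_refl_left : ∀ p : Path e e, mul (Path.refl e) p = p := by
    intro p; ext t; simp [mul_apply, h1]
  have hmul_refl_right : ∀ p : Path e e, mul p (Path.refl e) = p := by
    intro p; ext t; simp [mul_apply, h2]
  have hmul_diag : ∀ p : Path e e, mul p p = p := by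
    intro p; ext t; simp [mul_apply, h3]
  have hmul_trans : ∀ p p' q q' : Path e e,
      mul (p.trans p') (q.trans q') = (mul p q).trans (mul p' q') := by
    intro p p' q q'
    ext t
    simp only [mul_apply, Path.trans_apply]
    split_ifs <;> rfl
  have hmul_hom : ∀ p p' q q' : Path e e, p.Homotopic p' → q.Homotopic q' →
      (mul p q).Homotopic (mul p' q') := by
    rintro p p' q q' ⟨F⟩ ⟨G⟩
    exact ⟨{ toFun := fun x => m (F x, G x)
             continuous_toFun := hc.comp (F.continuous.prodMk G.continuous)
             map_zero_left := fun t => by simp [mul_apply]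
             map_one_left := fun t => by simp [mul_apply]
             prop' := fun t x hx => by
               have hF := F.eq_fst t hx
               have hG := G.eq_fst t hx
               simp only [ContinuousMap.coe_mk]
               rw [hF, hG]
               rfl }⟩
  -- key homotopy: every loop squared is homotopic to itself
  have key : ∀ γ : Path e e, (γ.trans γ).Homotopic γ := by
    intro γ
    have heq : γ.trans γ = mul (γ.trans (Path.refl e)) ((Path.refl e).trans γ) := by
      rw [hmul_trans, hmul_refl_right, hmul_refl_left]
    rw [heq]
    have h := hmul_hom _ γ _ γ ⟨Path.Homotopy.transRefl γ⟩ ⟨Path.Homotopy.reflTrans γ⟩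
    rwa [hmul_diag] at h
  -- quotient level
  letI : ∀ x y : X, Setoid (Path x y) := fun x y => Path.Homotopic.setoid x y
  have hq : ∀ p : Path.Homotopic.Quotient e e, p.trans p = p := by
    intro p
    induction p using Quotient.inductionOn with
    | h a => exact Quotient.sound (key a)
  -- every element of the fundamental group is trivial
  have hone : ∀ g : FundamentalGroup X e, g = 1 := by
    intro g
    have hsq : g * g = g := by
      rw [FundamentalGroup.mul_def]
      exact hq g
    have : g * g = g * 1 := by rw [hsq, mul_one]
    exact mul_left_cancel this
  exact ⟨fun a b => by rw [hone a, hone b]⟩
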